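/- The encoding ⟦·⟧ of X-terms into *x-terms preserves the set of free names: for every X-term P, N(P) = N(⟦P⟧). -/

import Mathlib

namespace StarX

/-- Simple types `A, B ::= T | A → B`. -/
inductive Ty : Type
  | base : Ty
  | arrow : Ty → Ty → Ty
  deriving DecidableEq

/-- Terms of the *x-calculus (including the two active cuts), built from
innames and outnames (both modelled as natural numbers). -/
inductive Term : Type
  | caps : ℕ → ℕ → Term                      -- ⟨x·α⟩
  | exp  : ℕ → Term → ℕ → ℕ → Term           -- x̂ P β̂ · α
  | imp  : Term → ℕ → ℕ → ℕ → Term → Term    -- P α̂ [x] ŷ Q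
  | cut  : Term → ℕ → ℕ → Term → Term        -- P α̂ † x̂ Q
  | lcut : Term → ℕ → ℕ → Term → Term        -- left-active cut
  | rcut : Term → ℕ → ℕ → Term → Term        -- right-active cut
  | wl   : ℕ → Term → Term                   -- x ⊙ P   (left eraser)
  | wr   : Term → ℕ → Term                   -- P ⊙ α   (right eraser)
  | cl   : ℕ → ℕ → ℕ → Term → Term           -- x < (x̂₁, x̂₂) P  (left duplicator)
  | cr   : Term → ℕ → ℕ → ℕ → Term           -- P (α̂₁, α̂₂) > α  (right duplicator)
  deriving DecidableEq

namespace Term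

/-- Free innames `I(P)`. -/
def fin : Term → Finset ℕ
  | caps x _ => {x}
  | exp x P _ _ => P.fin.erase x
  | imp P _ x y Q => insert x (P.fin ∪ Q.fin.erase y)
  | cut P _ x Q => P.fin ∪ Q.fin.erase x
  | lcut P _ x Q => P.fin ∪ Q.fin.erase x
  | rcut P _ x Q => P.fin ∪ Q.fin.erase x
  | wl x P => insert x P.fin
  | wr P _ => P.fin
  | cl x x1 x2 P => insert x ((P.fin.erase x1).erase x2)
  | cr P _ _ _ => P.fin

/-- Free outnames `O(P)`. -/
def fout : Term → Finset ℕ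
  | caps _ a => {a}
  | exp _ P b a => insert a (P.fout.erase b)
  | imp P a _ _ Q => P.fout.erase a ∪ Q.fout
  | cut P a _ Q => P.fout.erase a ∪ Q.fout
  | lcut P a _ Q => P.fout.erase a ∪ Q.fout
  | rcut P a _ Q => P.fout.erase a ∪ Q.fout
  | wl _ P => P.fout
  | wr P a => insert a P.fout
  | cl _ _ _ P => P.fout
  | cr P a1 a2 a => insert a ((P.fout.erase a1).erase a2)

/-- A strict bound for the names occurring in a term (used to pick fresh names). -/
def maxName : Term → ℕ
  | caps x a => max x a
  | exp x P b a => max (max x (max b a)) P.maxName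
  | imp P a x y Q => max (max a (max x y)) (max P.maxName Q.maxName)
  | cut P a x Q => max (max a x) (max P.maxName Q.maxName)
  | lcut P a x Q => max (max a x) (max P.maxName Q.maxName)
  | rcut P a x Q => max (max a x) (max P.maxName Q.maxName)
  | wl x P => max x P.maxName
  | wr P a => max a P.maxName
  | cl x x1 x2 P => max (max x (max x1 x2)) P.maxName
  | cr P a1 a2 a => max (max a (max a1 a2)) P.maxName

/-- Renaming `P{n/o}` of the (unique) free inname `o` by the fresh inname `n`. -/
def renameIn (n o : ℕ) : Term → Term
  | caps x a => caps (if x = o then n else x) a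
  | exp x P b a => if x = o then exp x P b a else exp x (P.renameIn n o) b a
  | imp P a x y Q =>
      imp (P.renameIn n o) a (if x = o then n else x) y
        (if y = o then Q else Q.renameIn n o)
  | cut P a x Q => cut (P.renameIn n o) a x (if x = o then Q else Q.renameIn n o)
  | lcut P a x Q => lcut (P.renameIn n o) a x (if x = o then Q else Q.renameIn n o)
  | rcut P a x Q => rcut (P.renameIn n o) a x (if x = o then Q else Q.renameIn n o)
  | wl x P => wl (if x = o then n else x) (P.renameIn n o)
  | wr P a => wr (P.renameIn n o) a
  | cl x x1 x2 P =>
      cl (if x = o then n else x) x1 x2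
        (if x1 = o ∨ x2 = o then P else P.renameIn n o)
  | cr P a1 a2 a => cr (P.renameIn n o) a1 a2 a

/-- Renaming `P{n/o}` of the (unique) free outname `o` by the fresh outname `n`. -/
def renameOut (n o : ℕ) : Term → Term
  | caps x a => caps x (if a = o then n else a)
  | exp x P b a =>
      exp x (if b = o then P else P.renameOut n o) b (if a = o then n else a)
  | imp P a x y Q =>
      imp (if a = o then P else P.renameOut n o) a x y (Q.renameOut n o)
  | cut P a x Q => cut (if a = o then P else P.renameOut n o) a x (Q.renameOut n o)
  | lcut P a x Q => lcut (if a = o then P else P.renameOut n o) a x (Q.renameOut n o)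
  | rcut P a x Q => rcut (if a = o then P else P.renameOut n o) a x (Q.renameOut n o)
  | wl x P => wl x (P.renameOut n o)
  | wr P a => wr (P.renameOut n o) (if a = o then n else a)
  | cl x x1 x2 P => cl x x1 x2 (P.renameOut n o)
  | cr P a1 a2 a =>
      cr (if a1 = o ∨ a2 = o then P else P.renameOut n o) a1 a2
        (if a = o then n else a)

/-- Shift every name (free and bound) of a term by `k`. -/
def shift (k : ℕ) : Term → Term
  | caps x a => caps (x + k) (a + k)
  | exp x P b a => exp (x + k) (P.shift k) (b + k) (a + k)
  | imp P a x y Q => imp (P.shift k) (a + k) (x + k) (y + k) (Q.shift k)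
  | cut P a x Q => cut (P.shift k) (a + k) (x + k) (Q.shift k)
  | lcut P a x Q => lcut (P.shift k) (a + k) (x + k) (Q.shift k)
  | rcut P a x Q => rcut (P.shift k) (a + k) (x + k) (Q.shift k)
  | wl x P => wl (x + k) (P.shift k)
  | wr P a => wr (P.shift k) (a + k)
  | cl x x1 x2 P => cl (x + k) (x1 + k) (x2 + k) (P.shift k)
  | cr P a1 a2 a => cr (P.shift k) (a1 + k) (a2 + k) (a + k)

/-- Linearity: every name has at most one free occurrence and every binder binds
exactly one actual occurrence of a name (introduced names of erasers and
duplicators are fresh).  `*x`-terms are precisely the linear terms. -/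
inductive Linear : Term → Prop
  | caps (x a : ℕ) : Linear (caps x a)
  | exp {P : Term} {x b a : ℕ} : Linear P → x ∈ P.fin → b ∈ P.fout →
      a ∉ P.fout.erase b → Linear (exp x P b a)
  | imp {P Q : Term} {a x y : ℕ} : Linear P → Linear Q → a ∈ P.fout → y ∈ Q.fin →
      x ∉ P.fin ∪ Q.fin.erase y → Disjoint P.fin (Q.fin.erase y) →
      Disjoint (P.fout.erase a) Q.fout → Linear (imp P a x y Q)
  | cut {P Q : Term} {a x : ℕ} : Linear P → Linear Q → a ∈ P.fout → x ∈ Q.fin →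
      Disjoint P.fin (Q.fin.erase x) → Disjoint (P.fout.erase a) Q.fout →
      Linear (cut P a x Q)
  | lcut {P Q : Term} {a x : ℕ} : Linear P → Linear Q → a ∈ P.fout → x ∈ Q.fin →
      Disjoint P.fin (Q.fin.erase x) → Disjoint (P.fout.erase a) Q.fout →
      Linear (lcut P a x Q)
  | rcut {P Q : Term} {a x : ℕ} : Linear P → Linear Q → a ∈ P.fout → x ∈ Q.fin →
      Disjoint P.fin (Q.fin.erase x) → Disjoint (P.fout.erase a) Q.fout →
      Linear (rcut P a x Q)
  | wl {P : Term} {x : ℕ} : Linear P → x ∉ P.fin → Linear (wl x P)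
  | wr {P : Term} {a : ℕ} : Linear P → a ∉ P.fout → Linear (wr P a)
  | cl {P : Term} {x x1 x2 : ℕ} : Linear P → x1 ∈ P.fin → x2 ∈ P.fin → x1 ≠ x2 →
      x ∉ (P.fin.erase x1).erase x2 → Linear (cl x x1 x2 P)
  | cr {P : Term} {a1 a2 a : ℕ} : Linear P → a1 ∈ P.fout → a2 ∈ P.fout → a1 ≠ a2 →
      a ∉ (P.fout.erase a1).erase a2 → Linear (cr P a1 a2 a)

end Term

/-- Contexts: terms with one hole (closed under composition, which is subsumed
by the inductive nesting). -/
inductive Ctx : Type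
  | hole : Ctx
  | exp  : ℕ → Ctx → ℕ → ℕ → Ctx
  | impL : Ctx → ℕ → ℕ → ℕ → Term → Ctx
  | impR : Term → ℕ → ℕ → ℕ → Ctx → Ctx
  | cutL : Ctx → ℕ → ℕ → Term → Ctx
  | cutR : Term → ℕ → ℕ → Ctx → Ctx
  | wl   : ℕ → Ctx → Ctx
  | wr   : Ctx → ℕ → Ctx
  | cl   : ℕ → ℕ → ℕ → Ctx → Ctx
  | cr   : Ctx → ℕ → ℕ → ℕ → Ctx

/-- Placing a term in the hole of a context: `C{P}`. -/
def Ctx.fill : Ctx → Term → Term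
  | .hole, P => P
  | .exp x C b a, P => .exp x (C.fill P) b a
  | .impL C a x y Q, P => .imp (C.fill P) a x y Q
  | .impR Q a x y C, P => .imp Q a x y (C.fill P)
  | .cutL C a x Q, P => .cut (C.fill P) a x Q
  | .cutR Q a x C, P => .cut Q a x (C.fill P)
  | .wl x C, P => .wl x (C.fill P)
  | .wr C a, P => .wr (C.fill P) a
  | .cl x x1 x2 C, P => .cl x x1 x2 (C.fill P)
  | .cr C a1 a2 a, P => .cr (C.fill P) a1 a2 a

/-- The subterm relation: `Q ⪯ P` iff `P = C{Q}` for some context `C`. -/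
def Subterm (Q P : Term) : Prop := ∃ C : Ctx, C.fill Q = P

/-- Principal innames (L-principal or S-principal). -/
inductive PrincipalIn : Term → ℕ → Prop
  | caps (x a : ℕ) : PrincipalIn (.caps x a) x
  | imp (P : Term) (a x y : ℕ) (Q : Term) : PrincipalIn (.imp P a x y Q) x
  | wl (x : ℕ) (P : Term) : PrincipalIn (.wl x P) x
  | cl (x x1 x2 : ℕ) (P : Term) : PrincipalIn (.cl x x1 x2 P) x

/-- Principal outnames (L-principal or S-principal). -/
inductive PrincipalOut : Term → ℕ → Prop
  | caps (x a : ℕ) : PrincipalOut (.caps x a) a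
  | exp (x : ℕ) (P : Term) (b a : ℕ) : PrincipalOut (.exp x P b a) a
  | wr (P : Term) (a : ℕ) : PrincipalOut (.wr P a) a
  | cr (P : Term) (a1 a2 a : ℕ) : PrincipalOut (.cr P a1 a2 a) a

/-- L-principal innames (introduced by a logical term). -/
inductive LPrincipalIn : Term → ℕ → Prop
  | caps (x a : ℕ) : LPrincipalIn (.caps x a) x
  | imp (P : Term) (a x y : ℕ) (Q : Term) : LPrincipalIn (.imp P a x y Q) x

/-- L-principal outnames (introduced by a logical term). -/
inductive LPrincipalOut : Term → ℕ → Prop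
  | caps (x a : ℕ) : LPrincipalOut (.caps x a) a
  | exp (x : ℕ) (P : Term) (b a : ℕ) : LPrincipalOut (.exp x P b a) a

namespace Term

/-- `W(P)`: prefix `P` with left erasers for the innames in `I` and right
erasers for the outnames in `O`. -/
def wChain (I O : Finset ℕ) (P : Term) : Term :=
  (O.sort (· ≤ ·)).foldr (fun a t => wr t a)
    ((I.sort (· ≤ ·)).foldr (fun x t => wl x t) P)

/-- Chain of left duplicators `z < (ẑ₊ₖ, ẑ₊₂ₖ)` for every `z ∈ S`. -/
def clChain (k : ℕ) (S : Finset ℕ) (P : Term) : Term :=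
  (S.sort (· ≤ ·)).foldr (fun z t => cl z (z + k) (z + 2 * k) t) P

/-- Chain of right duplicators `(â₊ₖ, â₊₂ₖ) > a` for every `a ∈ S`. -/
def crChain (k : ℕ) (S : Finset ℕ) (P : Term) : Term :=
  (S.sort (· ≤ ·)).foldr (fun a t => cr t (a + k) (a + 2 * k) a) P

/-- Rename every inname in `S` to its `+k` copy. -/
def renameSetIn (S : Finset ℕ) (k : ℕ) (P : Term) : Term :=
  (S.sort (· ≤ ·)).foldr (fun z t => t.renameIn (z + k) z) P

/-- Rename every outname in `S` to its `+k` copy. -/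
def renameSetOut (S : Finset ℕ) (k : ℕ) (P : Term) : Term :=
  (S.sort (· ≤ ·)).foldr (fun a t => t.renameOut (a + k) a) P

/-- Result of the left structural (duplication) action
`(P (α̂₁,α̂₂)>α) α̂ † x̂ Q  →  P ⟨α₁,α₂ † x̂ Q⟩`: the two indexed copies of `Q`
are cut against `α₁` and `α₂` and the doubled free names of the copies are
joined back by duplicators. -/
def duplResL (P : Term) (a1 a2 x : ℕ) (Q : Term) : Term :=
  clChain (P.maxName + Q.maxName + x + 1) (Q.fin.erase x)
    (crChain (P.maxName + Q.maxName + x + 1) Q.fout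
      (lcut (lcut P a1 (x + (P.maxName + Q.maxName + x + 1))
          (Q.shift (P.maxName + Q.maxName + x + 1)))
        a2 (x + 2 * (P.maxName + Q.maxName + x + 1))
        (Q.shift (2 * (P.maxName + Q.maxName + x + 1)))))

/-- Result of the right structural (duplication) action, symmetrically. -/
def duplResR (P : Term) (a x1 x2 : ℕ) (Q : Term) : Term :=
  clChain (P.maxName + Q.maxName + a + 1) P.fin
    (crChain (P.maxName + Q.maxName + a + 1) (P.fout.erase a)
      (rcut (P.shift (P.maxName + Q.maxName + a + 1))
        (a + (P.maxName + Q.maxName + a + 1)) x1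
        (rcut (P.shift (2 * (P.maxName + Q.maxName + a + 1)))
          (a + 2 * (P.maxName + Q.maxName + a + 1)) x2 Q)))

end Term

open Term in
/-- The root reduction rules of the *x-calculus: activation, structural
(erasure and duplication), deactivation, logical, and propagation rules. -/
inductive Step : Term → Term → Prop
  -- activation rules
  | actL {P : Term} {a x : ℕ} {Q : Term} : ¬ LPrincipalOut P a →
      Step (.cut P a x Q) (.lcut P a x Q)
  | actR {P : Term} {a x : ℕ} {Q : Term} : ¬ LPrincipalIn Q x →
      Step (.cut P a x Q) (.rcut P a x Q)
  -- deactivation rules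
  | deactL {P : Term} {a x : ℕ} {Q : Term} : LPrincipalOut P a →
      Step (.lcut P a x Q) (.cut P a x Q)
  | deactR {P : Term} {a x : ℕ} {Q : Term} : LPrincipalIn Q x →
      Step (.rcut P a x Q) (.cut P a x Q)
  -- logical actions
  | renL {y a x : ℕ} {Q : Term} :
      Step (.cut (.caps y a) a x Q) (Q.renameIn y x)
  | renR {P : Term} {a x b : ℕ} :
      Step (.cut P a x (.caps x b)) (P.renameOut b a)
  | insert1 {y : ℕ} {P : Term} {b a x : ℕ} {Q : Term} {g z : ℕ} {R : Term} :
      Step (.cut (.exp y P b a) a x (.imp Q g x z R))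
        (.cut (.cut Q g y P) b z R)
  | insert2 {y : ℕ} {P : Term} {b a x : ℕ} {Q : Term} {g z : ℕ} {R : Term} :
      Step (.cut (.exp y P b a) a x (.imp Q g x z R))
        (.cut Q g y (.cut P b z R))
  -- structural actions: erasure
  | erasL {P : Term} {a x : ℕ} {Q : Term} :
      Step (.lcut (.wr P a) a x Q) (wChain (Q.fin.erase x) Q.fout P)
  | erasR {P : Term} {a x : ℕ} {Q : Term} :
      Step (.rcut P a x (.wl x Q)) (wChain P.fin (P.fout.erase a) Q)
  -- structural actions: duplication
  | duplL {P : Term} {a1 a2 a x : ℕ} {Q : Term} :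
      Step (.lcut (.cr P a1 a2 a) a x Q) (duplResL P a1 a2 x Q)
  | duplR {P : Term} {a x x1 x2 : ℕ} {Q : Term} :
      Step (.rcut P a x (.cl x x1 x2 Q)) (duplResR P a x1 x2 Q)
  -- left propagation rules
  | propExpL {y : ℕ} {P : Term} {g b a x : ℕ} {R : Term} : b ≠ a →
      Step (.lcut (.exp y P g b) a x R) (.exp y (.lcut P a x R) g b)
  | propImpLL {P : Term} {g y z : ℕ} {Q : Term} {a x : ℕ} {R : Term} :
      a ∈ P.fout.erase g →
      Step (.lcut (.imp P g y z Q) a x R) (.imp (.lcut P a x R) g y z Q)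
  | propImpLR {P : Term} {g y z : ℕ} {Q : Term} {a x : ℕ} {R : Term} :
      a ∈ Q.fout →
      Step (.lcut (.imp P g y z Q) a x R) (.imp P g y z (.lcut Q a x R))
  | propCutLL {P : Term} {g y : ℕ} {Q : Term} {a x : ℕ} {R : Term} :
      a ∈ P.fout.erase g →
      Step (.lcut (.cut P g y Q) a x R) (.cut (.lcut P a x R) g y Q)
  | propCutLR {P : Term} {g y : ℕ} {Q : Term} {a x : ℕ} {R : Term} :
      a ∈ Q.fout → Q ≠ .caps y a →
      Step (.lcut (.cut P g y Q) a x R) (.cut P g y (.lcut Q a x R))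
  | propCutCapsL {P : Term} {g z a x : ℕ} {R : Term} :
      Step (.lcut (.cut P g z (.caps z a)) a x R) (.cut P g x R)
  | propWlL {z : ℕ} {P : Term} {a x : ℕ} {R : Term} :
      Step (.lcut (.wl z P) a x R) (.wl z (.lcut P a x R))
  | propWrL {P : Term} {g a x : ℕ} {R : Term} : g ≠ a →
      Step (.lcut (.wr P g) a x R) (.wr (.lcut P a x R) g)
  | propClL {z z1 z2 : ℕ} {P : Term} {a x : ℕ} {R : Term} :
      Step (.lcut (.cl z z1 z2 P) a x R) (.cl z z1 z2 (.lcut P a x R))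
  | propCrL {P : Term} {g1 g2 g a x : ℕ} {R : Term} : g ≠ a →
      Step (.lcut (.cr P g1 g2 g) a x R) (.cr (.lcut P a x R) g1 g2 g)
  -- right propagation rules
  | propExpR {P : Term} {a x y : ℕ} {Q : Term} {g b : ℕ} : y ≠ x →
      Step (.rcut P a x (.exp y Q g b)) (.exp y (.rcut P a x Q) g b)
  | propImpRL {P : Term} {a x : ℕ} {Q : Term} {g z w : ℕ} {R : Term} :
      z ≠ x → x ∈ Q.fin →
      Step (.rcut P a x (.imp Q g z w R)) (.imp (.rcut P a x Q) g z w R)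
  | propImpRR {P : Term} {a x : ℕ} {Q : Term} {g z w : ℕ} {R : Term} :
      z ≠ x → x ∈ R.fin.erase w →
      Step (.rcut P a x (.imp Q g z w R)) (.imp Q g z w (.rcut P a x R))
  | propCutRL {P : Term} {a x : ℕ} {Q : Term} {g y : ℕ} {R : Term} :
      x ∈ Q.fin → Q ≠ .caps x g →
      Step (.rcut P a x (.cut Q g y R)) (.cut (.rcut P a x Q) g y R)
  | propCutRR {P : Term} {a x : ℕ} {Q : Term} {g y : ℕ} {R : Term} :
      x ∈ R.fin.erase y →
      Step (.rcut P a x (.cut Q g y R)) (.cut Q g y (.rcut P a x R))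
  | propCutCapsR {P : Term} {a x g y : ℕ} {R : Term} :
      Step (.rcut P a x (.cut (.caps x g) g y R)) (.cut P a y R)
  | propWlR {P : Term} {a x z : ℕ} {Q : Term} : z ≠ x →
      Step (.rcut P a x (.wl z Q)) (.wl z (.rcut P a x Q))
  | propWrR {P : Term} {a x : ℕ} {Q : Term} {g : ℕ} :
      Step (.rcut P a x (.wr Q g)) (.wr (.rcut P a x Q) g)
  | propClR {P : Term} {a x z z1 z2 : ℕ} {Q : Term} : z ≠ x →
      Step (.rcut P a x (.cl z z1 z2 Q)) (.cl z z1 z2 (.rcut P a x Q))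
  | propCrR {P : Term} {a x : ℕ} {Q : Term} {g1 g2 g : ℕ} :
      Step (.rcut P a x (.cr Q g1 g2 g)) (.cr (.rcut P a x Q) g1 g2 g)

/-- The reduction relation `→` of *x: contextual closure of the root rules. -/
inductive Red : Term → Term → Prop
  | ctx {P Q : Term} (C : Ctx) : Step P Q → Red (C.fill P) (C.fill Q)

/-- The root simplification rules `(s_L)` and `(s_R)`. -/
inductive SimpStep : Term → Term → Prop
  | sL {x y z : ℕ} {P : Term} :
      SimpStep (.cl x y z (.wl z P)) (P.renameIn x y)
  | sR {P : Term} {g b a : ℕ} :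
      SimpStep (.cr (.wr P g) b g a) (P.renameOut a b)

/-- The simplification relation `⇢`: contextual closure of `(s_L)`, `(s_R)`. -/
inductive Simp : Term → Term → Prop
  | ctx {P Q : Term} (C : Ctx) : SimpStep P Q → Simp (C.fill P) (C.fill Q)

/-- Typing contexts: finite sets of (name, type) declarations. -/
abbrev Cx : Type := Finset (ℕ × Ty)

/-- The simply typed *x system (corresponding to the sequent calculus G1 with
explicit weakening and contraction): `P : Γ ⊢ Δ`. -/
inductive Types : Term → Cx → Cx → Prop
  | ax (x a : ℕ) (A : Ty) : Types (.caps x a) {(x, A)} {(a, A)}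
  | arrR {P : Term} {Γ Δ : Cx} {x b a : ℕ} {A B : Ty} :
      Types P (insert (x, A) Γ) (insert (b, B) Δ) →
      Types (.exp x P b a) Γ (insert (a, Ty.arrow A B) Δ)
  | arrL {P Q : Term} {Γ Δ Γ' Δ' : Cx} {a x y : ℕ} {A B : Ty} :
      Types P Γ (insert (a, A) Δ) → Types Q (insert (y, B) Γ') Δ' →
      Types (.imp P a x y Q) (insert (x, Ty.arrow A B) (Γ ∪ Γ')) (Δ ∪ Δ')
  | cut {P Q : Term} {Γ Δ Γ' Δ' : Cx} {a x : ℕ} {A : Ty} :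
      Types P Γ (insert (a, A) Δ) → Types Q (insert (x, A) Γ') Δ' →
      Types (.cut P a x Q) (Γ ∪ Γ') (Δ ∪ Δ')
  | lcut {P Q : Term} {Γ Δ Γ' Δ' : Cx} {a x : ℕ} {A : Ty} :
      Types P Γ (insert (a, A) Δ) → Types Q (insert (x, A) Γ') Δ' →
      Types (.lcut P a x Q) (Γ ∪ Γ') (Δ ∪ Δ')
  | rcut {P Q : Term} {Γ Δ Γ' Δ' : Cx} {a x : ℕ} {A : Ty} :
      Types P Γ (insert (a, A) Δ) → Types Q (insert (x, A) Γ') Δ' →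
      Types (.rcut P a x Q) (Γ ∪ Γ') (Δ ∪ Δ')
  | weakL {P : Term} {Γ Δ : Cx} {x : ℕ} {A : Ty} :
      Types P Γ Δ → Types (.wl x P) (insert (x, A) Γ) Δ
  | weakR {P : Term} {Γ Δ : Cx} {a : ℕ} {A : Ty} :
      Types P Γ Δ → Types (.wr P a) Γ (insert (a, A) Δ)
  | contL {P : Term} {Γ Δ : Cx} {x x1 x2 : ℕ} {A : Ty} :
      Types P (insert (x1, A) (insert (x2, A) Γ)) Δ →
      Types (.cl x x1 x2 P) (insert (x, A) Γ) Δ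
  | contR {P : Term} {Γ Δ : Cx} {a1 a2 a : ℕ} {A : Ty} :
      Types P Γ (insert (a1, A) (insert (a2, A) Δ)) →
      Types (.cr P a1 a2 a) Γ (insert (a, A) Δ)

end StarX
namespace StarX

/-- Terms of the X-calculus (capsules, exporters, importers, cuts, active cuts);
not necessarily linear. -/
inductive XTerm : Type
  | caps : ℕ → ℕ → XTerm
  | exp  : ℕ → XTerm → ℕ → ℕ → XTerm
  | imp  : XTerm → ℕ → ℕ → ℕ → XTerm → XTerm
  | cut  : XTerm → ℕ → ℕ → XTerm → XTerm
  | lcut : XTerm → ℕ → ℕ → XTerm → XTerm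
  | rcut : XTerm → ℕ → ℕ → XTerm → XTerm
  deriving DecidableEq

namespace XTerm

/-- Free innames of an X-term. -/
def fin : XTerm → Finset ℕ
  | caps x _ => {x}
  | exp x P _ _ => P.fin.erase x
  | imp P _ x y Q => insert x (P.fin ∪ Q.fin.erase y)
  | cut P _ x Q => P.fin ∪ Q.fin.erase x
  | lcut P _ x Q => P.fin ∪ Q.fin.erase x
  | rcut P _ x Q => P.fin ∪ Q.fin.erase x

/-- Free outnames of an X-term. -/
def fout : XTerm → Finset ℕ
  | caps _ a => {a}
  | exp _ P b a => insert a (P.fout.erase b)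
  | imp P a _ _ Q => P.fout.erase a ∪ Q.fout
  | cut P a _ Q => P.fout.erase a ∪ Q.fout
  | lcut P a _ Q => P.fout.erase a ∪ Q.fout
  | rcut P a _ Q => P.fout.erase a ∪ Q.fout

/-- Rename all free occurrences of the inname `o` by `n` in an X-term. -/
def renameIn (n o : ℕ) : XTerm → XTerm
  | caps x a => caps (if x = o then n else x) a
  | exp x P b a => if x = o then exp x P b a else exp x (P.renameIn n o) b a
  | imp P a x y Q =>
      imp (P.renameIn n o) a (if x = o then n else x) y
        (if y = o then Q else Q.renameIn n o)
  | cut P a x Q => cut (P.renameIn n o) a x (if x = o then Q else Q.renameIn n o)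
  | lcut P a x Q => lcut (P.renameIn n o) a x (if x = o then Q else Q.renameIn n o)
  | rcut P a x Q => rcut (P.renameIn n o) a x (if x = o then Q else Q.renameIn n o)

/-- Rename all free occurrences of the outname `o` by `n` in an X-term. -/
def renameOut (n o : ℕ) : XTerm → XTerm
  | caps x a => caps x (if a = o then n else a)
  | exp x P b a =>
      exp x (if b = o then P else P.renameOut n o) b (if a = o then n else a)
  | imp P a x y Q =>
      imp (if a = o then P else P.renameOut n o) a x y (Q.renameOut n o)
  | cut P a x Q => cut (if a = o then P else P.renameOut n o) a x (Q.renameOut n o)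
  | lcut P a x Q => lcut (if a = o then P else P.renameOut n o) a x (Q.renameOut n o)
  | rcut P a x Q => rcut (if a = o then P else P.renameOut n o) a x (Q.renameOut n o)

end XTerm

/-- `P` freshly introduces the inname `x`. -/
inductive FreshIntroIn : XTerm → ℕ → Prop
  | caps (x a : ℕ) : FreshIntroIn (.caps x a) x
  | imp {Q : XTerm} {a x y : ℕ} {R : XTerm} : x ∉ Q.fin → x ∉ R.fin →
      FreshIntroIn (.imp Q a x y R) x

/-- `P` freshly introduces the outname `α`. -/
inductive FreshIntroOut : XTerm → ℕ → Prop
  | caps (x a : ℕ) : FreshIntroOut (.caps x a) a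
  | exp {x : ℕ} {Q : XTerm} {b a : ℕ} : a ∉ Q.fout →
      FreshIntroOut (.exp x Q b a) a

/-- X-calculus one-hole contexts. -/
inductive XCtx : Type
  | hole : XCtx
  | exp  : ℕ → XCtx → ℕ → ℕ → XCtx
  | impL : XCtx → ℕ → ℕ → ℕ → XTerm → XCtx
  | impR : XTerm → ℕ → ℕ → ℕ → XCtx → XCtx
  | cutL : XCtx → ℕ → ℕ → XTerm → XCtx
  | cutR : XTerm → ℕ → ℕ → XCtx → XCtx

def XCtx.fill : XCtx → XTerm → XTerm
  | .hole, P => P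
  | .exp x C b a, P => .exp x (C.fill P) b a
  | .impL C a x y Q, P => .imp (C.fill P) a x y Q
  | .impR Q a x y C, P => .imp Q a x y (C.fill P)
  | .cutL C a x Q, P => .cut (C.fill P) a x Q
  | .cutR Q a x C, P => .cut Q a x (C.fill P)

open XTerm in
/-- The root reduction rules of the X-calculus: logical rules (renamings and
insertion, applying to freshly introduced names), activation rules, and the
left/right propagation rules (including garbage collection, duplication,
deactivation and the capsule exceptions). -/
inductive StepX : XTerm → XTerm → Prop
  -- logical rules
  | capRen {y a x b : ℕ} :
      StepX (.cut (.caps y a) a x (.caps x b)) (.caps y b)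
  | expRen {y : ℕ} {P : XTerm} {b a x g : ℕ} : a ∉ P.fout →
      StepX (.cut (.exp y P b a) a x (.caps x g)) (.exp y P b g)
  | impRen {y a x : ℕ} {Q : XTerm} {b z : ℕ} {R : XTerm} :
      x ∉ Q.fin → x ∉ R.fin →
      StepX (.cut (.caps y a) a x (.imp Q b x z R)) (.imp Q b y z R)
  | insert1 {y : ℕ} {P : XTerm} {b a x : ℕ} {Q : XTerm} {g z : ℕ} {R : XTerm} :
      a ∉ P.fout → x ∉ Q.fin → x ∉ R.fin →
      StepX (.cut (.exp y P b a) a x (.imp Q g x z R))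
        (.cut (.cut Q g y P) b z R)
  | insert2 {y : ℕ} {P : XTerm} {b a x : ℕ} {Q : XTerm} {g z : ℕ} {R : XTerm} :
      a ∉ P.fout → x ∉ Q.fin → x ∉ R.fin →
      StepX (.cut (.exp y P b a) a x (.imp Q g x z R))
        (.cut Q g y (.cut P b z R))
  -- activation rules
  | actL {P : XTerm} {a x : ℕ} {Q : XTerm} : ¬ FreshIntroOut P a →
      StepX (.cut P a x Q) (.lcut P a x Q)
  | actR {P : XTerm} {a x : ℕ} {Q : XTerm} : ¬ FreshIntroIn Q x →
      StepX (.cut P a x Q) (.rcut P a x Q)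
  -- left propagation rules
  | gcL {P : XTerm} {a x : ℕ} {Q : XTerm} : a ∉ P.fout →
      StepX (.lcut P a x Q) P
  | deactL {P : XTerm} {a x : ℕ} {Q : XTerm} : FreshIntroOut P a →
      StepX (.lcut P a x Q) (.cut P a x Q)
  | propExpL {y : ℕ} {P : XTerm} {g b a x : ℕ} {R : XTerm} : b ≠ a →
      StepX (.lcut (.exp y P g b) a x R) (.exp y (.lcut P a x R) g b)
  | propExpDuplDeactL {y : ℕ} {P : XTerm} {g a x : ℕ} {R : XTerm} :
      a ∈ P.fout →
      StepX (.lcut (.exp y P g a) a x R)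
        (.cut (.exp y (.lcut P a x R) g a) a x R)
  | propImpL {P : XTerm} {g y z : ℕ} {Q : XTerm} {a x : ℕ} {R : XTerm} :
      StepX (.lcut (.imp P g y z Q) a x R)
        (.imp (.lcut P a x R) g y z (.lcut Q a x R))
  | propCutL {P : XTerm} {g y : ℕ} {Q : XTerm} {a x : ℕ} {R : XTerm} :
      Q ≠ .caps y a →
      StepX (.lcut (.cut P g y Q) a x R)
        (.cut (.lcut P a x R) g y (.lcut Q a x R))
  | propCutCapsL {P : XTerm} {g z a x : ℕ} {R : XTerm} :
      StepX (.lcut (.cut P g z (.caps z a)) a x R) (.cut P g x R)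
  -- right propagation rules
  | gcR {P : XTerm} {a x : ℕ} {Q : XTerm} : x ∉ Q.fin →
      StepX (.rcut P a x Q) Q
  | deactR {P : XTerm} {a x : ℕ} {Q : XTerm} : FreshIntroIn Q x →
      StepX (.rcut P a x Q) (.cut P a x Q)
  | propExpR {P : XTerm} {a x y : ℕ} {Q : XTerm} {g b : ℕ} : y ≠ x →
      StepX (.rcut P a x (.exp y Q g b)) (.exp y (.rcut P a x Q) g b)
  | propImpR {P : XTerm} {a x : ℕ} {Q : XTerm} {g w z : ℕ} {R : XTerm} :
      w ≠ x →
      StepX (.rcut P a x (.imp Q g w z R))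
        (.imp (.rcut P a x Q) g w z (.rcut P a x R))
  | propImpDuplDeactR {P : XTerm} {a x : ℕ} {Q : XTerm} {g z : ℕ} {R : XTerm} :
      x ∈ Q.fin ∪ R.fin →
      StepX (.rcut P a x (.imp Q g x z R))
        (.cut P a x (.imp (.rcut P a x Q) g x z (.rcut P a x R)))
  | propCutR {P : XTerm} {a x : ℕ} {Q : XTerm} {g y : ℕ} {R : XTerm} :
      Q ≠ .caps x g →
      StepX (.rcut P a x (.cut Q g y R))
        (.cut (.rcut P a x Q) g y (.rcut P a x R))
  | propCutCapsR {P : XTerm} {a x g y : ℕ} {R : XTerm} :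
      StepX (.rcut P a x (.cut (.caps x g) g y R)) (.cut P a y R)

/-- The reduction relation `→` of X: contextual closure of the root rules. -/
inductive RedX : XTerm → XTerm → Prop
  | ctx {P Q : XTerm} (C : XCtx) : StepX P Q → RedX (C.fill P) (C.fill Q)

/-- The simply typed X system (corresponding to G3, with implicit structural
rules): `P : Γ ⊢ Δ`. -/
inductive XTypes : XTerm → Cx → Cx → Prop
  | ax {Γ Δ : Cx} {x a : ℕ} {A : Ty} : (x, A) ∈ Γ → (a, A) ∈ Δ →
      XTypes (.caps x a) Γ Δ
  | arrR {P : XTerm} {Γ Δ : Cx} {x b a : ℕ} {A B : Ty} :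
      XTypes P (insert (x, A) Γ) (insert (b, B) Δ) →
      XTypes (.exp x P b a) Γ (insert (a, Ty.arrow A B) Δ)
  | arrL {P Q : XTerm} {Γ Δ : Cx} {a x y : ℕ} {A B : Ty} :
      XTypes P Γ (insert (a, A) Δ) → XTypes Q (insert (y, B) Γ) Δ →
      XTypes (.imp P a x y Q) (insert (x, Ty.arrow A B) Γ) Δ
  | cut {P Q : XTerm} {Γ Δ : Cx} {a x : ℕ} {A : Ty} :
      XTypes P Γ (insert (a, A) Δ) → XTypes Q (insert (x, A) Γ) Δ →
      XTypes (.cut P a x Q) Γ Δ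
  | lcut {P Q : XTerm} {Γ Δ : Cx} {a x : ℕ} {A : Ty} :
      XTypes P Γ (insert (a, A) Δ) → XTypes Q (insert (x, A) Γ) Δ →
      XTypes (.lcut P a x Q) Γ Δ
  | rcut {P Q : XTerm} {Γ Δ : Cx} {a x : ℕ} {A : Ty} :
      XTypes P Γ (insert (a, A) Δ) → XTypes Q (insert (x, A) Γ) Δ →
      XTypes (.rcut P a x Q) Γ Δ

/-- The encoding `⌊·⌋ : *x → X`: a homomorphism on capsules, exporters,
  importers and cuts, erasing erasers and translating duplicators by renaming
the two copies to the duplicator's introduced name. -/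
def floor : Term → XTerm
  | .caps x a => .caps x a
  | .exp x P b a => .exp x (floor P) b a
  | .imp P a x y Q => .imp (floor P) a x y (floor Q)
  | .cut P a x Q => .cut (floor P) a x (floor Q)
  | .lcut P a x Q => .lcut (floor P) a x (floor Q)
  | .rcut P a x Q => .rcut (floor P) a x (floor Q)
  | .wl _ P => floor P
  | .wr P _ => floor P
  | .cl x x1 x2 P => ((floor P).renameIn x x1).renameIn x x2
  | .cr P a1 a2 a => ((floor P).renameOut a a1).renameOut a a2

namespace Term

/-- Potential eraser: add a left eraser for `x` if `x` does not occur. -/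
def wlIf (x : ℕ) (P : Term) : Term := if x ∈ P.fin then P else .wl x P

/-- Potential eraser: add a right eraser for `a` if `a` does not occur. -/
def wrIf (a : ℕ) (P : Term) : Term := if a ∈ P.fout then P else .wr P a

/-- Potential contraction: rename the shared innames `SI` and outnames `SO` of
`P` and `Q` apart (to their `+k` and `+2k` copies), build the binary construct,
and join the copies with duplicators. -/
def join2 (k : ℕ) (SI SO : Finset ℕ) (P Q : Term)
    (build : Term → Term → Term) : Term :=
  clChain k SI (crChain k SO
    (build (renameSetOut SO k (renameSetIn SI k P))
           (renameSetOut SO (2 * k) (renameSetIn SI (2 * k) Q))))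

end Term

open Term in
/-- The encoding `⟦·⟧ : X → *x`: multiple free occurrences of a name are
renamed apart and joined with duplicators; erasers are inserted for binders
binding no occurrence and for names introduced over a term in which they occur. -/
def encode : XTerm → Term
  | .caps x a => .caps x a
  | .exp x P b a =>
      let P' := wrIf b (wlIf x (encode P))
      if a ∈ P'.fout then
        .cr (.exp x (P'.renameOut (a + (P'.maxName + a + 1)) a) b
              (a + 2 * (P'.maxName + a + 1)))
          (a + (P'.maxName + a + 1)) (a + 2 * (P'.maxName + a + 1)) a
      else .exp x P' b a
  | .imp P a x y Q =>
      let P' := wrIf a (encode P)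
      let Q' := wlIf y (encode Q)
      let k := P'.maxName + Q'.maxName + a + x + y + 1
      if x ∈ P'.fin ∪ Q'.fin.erase y then
        let P'' := P'.renameIn (x + 5 * k) x
        let Q'' := Q'.renameIn (x + 5 * k) x
        .cl x (x + 5 * k) (x + 6 * k)
          (join2 k (P''.fin ∩ Q''.fin.erase y) ((P''.fout.erase a) ∩ Q''.fout)
            P'' Q'' (fun p q => .imp p a (x + 6 * k) y q))
      else
        join2 k (P'.fin ∩ Q'.fin.erase y) ((P'.fout.erase a) ∩ Q'.fout)
          P' Q' (fun p q => .imp p a x y q)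
  | .cut P a x Q =>
      let P' := wrIf a (encode P)
      let Q' := wlIf x (encode Q)
      join2 (P'.maxName + Q'.maxName + a + x + 1)
        (P'.fin ∩ Q'.fin.erase x) ((P'.fout.erase a) ∩ Q'.fout)
        P' Q' (fun p q => .cut p a x q)
  | .lcut P a x Q =>
      let P' := wrIf a (encode P)
      let Q' := wlIf x (encode Q)
      join2 (P'.maxName + Q'.maxName + a + x + 1)
        (P'.fin ∩ Q'.fin.erase x) ((P'.fout.erase a) ∩ Q'.fout)
        P' Q' (fun p q => .lcut p a x q)
  | .rcut P a x Q =>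
      let P' := wrIf a (encode P)
      let Q' := wlIf x (encode Q)
      join2 (P'.maxName + Q'.maxName + a + x + 1)
        (P'.fin ∩ Q'.fin.erase x) ((P'.fout.erase a) ∩ Q'.fout)
        P' Q' (fun p q => .rcut p a x q)

end StarX


namespace StarX
namespace Term

/-- All innames, free and bound. -/
def allIn : Term → Finset ℕ
  | caps x _ => {x}
  | exp x P _ _ => insert x P.allIn
  | imp P _ x y Q => insert x (insert y (P.allIn ∪ Q.allIn))
  | cut P _ x Q => insert x (P.allIn ∪ Q.allIn)
  | lcut P _ x Q => insert x (P.allIn ∪ Q.allIn)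
  | rcut P _ x Q => insert x (P.allIn ∪ Q.allIn)
  | wl x P => insert x P.allIn
  | wr P _ => P.allIn
  | cl x x1 x2 P => insert x (insert x1 (insert x2 P.allIn))
  | cr P _ _ _ => P.allIn

/-- All outnames, free and bound. -/
def allOut : Term → Finset ℕ
  | caps _ a => {a}
  | exp _ P b a => insert b (insert a P.allOut)
  | imp P a _ _ Q => insert a (P.allOut ∪ Q.allOut)
  | cut P a _ Q => insert a (P.allOut ∪ Q.allOut)
  | lcut P a _ Q => insert a (P.allOut ∪ Q.allOut)
  | rcut P a _ Q => insert a (P.allOut ∪ Q.allOut)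
  | wl _ P => P.allOut
  | wr P a => insert a P.allOut
  | cl _ _ _ P => P.allOut
  | cr P a1 a2 a => insert a (insert a1 (insert a2 P.allOut))

lemma fin_subset_allIn : ∀ P : Term, P.fin ⊆ P.allIn := by
  intro P
  induction P <;> intro n hn <;>
    simp only [fin, allIn, Finset.mem_erase, Finset.mem_insert, Finset.mem_union,
      Finset.mem_singleton] at * <;> tauto

lemma fout_subset_allOut : ∀ P : Term, P.fout ⊆ P.allOut := by
  intro P
  induction P <;> intro n hn <;>
    simp only [fout, allOut, Finset.mem_erase, Finset.mem_insert, Finset.mem_union,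
      Finset.mem_singleton] at * <;> tauto

lemma allIn_le_maxName : ∀ P : Term, ∀ n ∈ P.allIn, n ≤ P.maxName := by
  intro P
  induction P <;> intro n hn <;>
    simp only [allIn, maxName, Finset.mem_insert, Finset.mem_union,
      Finset.mem_singleton, le_sup_iff] at * <;> aesop

lemma allOut_le_maxName : ∀ P : Term, ∀ n ∈ P.allOut, n ≤ P.maxName := by
  intro P
  induction P <;> intro n hn <;>
    simp only [allOut, maxName, Finset.mem_insert, Finset.mem_union,
      Finset.mem_singleton, le_sup_iff] at * <;> aesop

lemma fout_renameIn (n o : ℕ) : ∀ P : Term, (P.renameIn n o).fout = P.fout := by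
  intro P
  induction P <;> simp only [renameIn] <;> (try split_ifs) <;> simp_all [fout]

lemma fin_renameOut (n o : ℕ) : ∀ P : Term, (P.renameOut n o).fin = P.fin := by
  intro P
  induction P <;> simp only [renameOut] <;> (try split_ifs) <;> simp_all [fin]

lemma allOut_renameIn (n o : ℕ) : ∀ P : Term, (P.renameIn n o).allOut = P.allOut := by
  intro P
  induction P <;> simp only [renameIn] <;> (try split_ifs) <;> simp_all [allOut]

lemma allIn_renameOut (n o : ℕ) : ∀ P : Term, (P.renameOut n o).allIn = P.allIn := by
  intro P
  induction P <;> simp only [renameOut] <;> (try split_ifs) <;> simp_all [allIn]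

set_option maxHeartbeats 1000000 in
lemma mem_allIn_renameIn (n o m : ℕ) :
    ∀ P : Term, m ∈ (P.renameIn n o).allIn → m = n ∨ m ∈ P.allIn := by
  intro P
  induction P <;> intro hm <;> simp only [renameIn] at hm <;> (try split_ifs at hm) <;>
    simp_all only [allIn, Finset.mem_insert, Finset.mem_union, Finset.mem_singleton] <;>
    tauto

set_option maxHeartbeats 1000000 in
lemma mem_allOut_renameOut (n o m : ℕ) :
    ∀ P : Term, m ∈ (P.renameOut n o).allOut → m = n ∨ m ∈ P.allOut := by
  intro P
  induction P <;> intro hm <;> simp only [renameOut] at hm <;> (try split_ifs at hm) <;>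
    simp_all only [allOut, Finset.mem_insert, Finset.mem_union, Finset.mem_singleton] <;>
    tauto

set_option maxHeartbeats 1000000 in
lemma mem_fin_renameIn (n o : ℕ) :
    ∀ P : Term, n ∉ P.allIn → ∀ m,
      (m ∈ (P.renameIn n o).fin ↔ (m ∈ P.fin ∧ m ≠ o) ∨ (m = n ∧ o ∈ P.fin)) := by
  intro P
  induction P with
  | caps x a =>
      intro hn m
      simp only [allIn, Finset.mem_singleton] at hn
      simp only [renameIn, fin, Finset.mem_singleton]
      rcases eq_or_ne x o with h | h <;> aesop
  | exp x P b a ih =>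
      intro hn m
      simp only [allIn, Finset.mem_insert, not_or] at hn
      obtain ⟨hnx, hnP⟩ := hn
      simp only [renameIn]
      split_ifs with h <;>
        simp only [fin, Finset.mem_erase, ih hnP] <;> aesop
  | imp P a x y Q ihP ihQ =>
      intro hn m
      simp only [allIn, Finset.mem_insert, Finset.mem_union, not_or] at hn
      obtain ⟨hnx, hny, hnP, hnQ⟩ := hn
      simp only [renameIn]
      split_ifs with h1 h2 h2 <;>
        simp only [fin, Finset.mem_insert, Finset.mem_union, Finset.mem_erase,
          ihP hnP, ihQ hnQ] <;>
        aesop (config := { maxRuleApplications := 2000 })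
  | cut P a x Q ihP ihQ =>
      intro hn m
      simp only [allIn, Finset.mem_insert, Finset.mem_union, not_or] at hn
      obtain ⟨hnx, hnP, hnQ⟩ := hn
      simp only [renameIn]
      split_ifs with h <;>
        simp only [fin, Finset.mem_union, Finset.mem_erase, ihP hnP, ihQ hnQ] <;> aesop
  | lcut P a x Q ihP ihQ =>
      intro hn m
      simp only [allIn, Finset.mem_insert, Finset.mem_union, not_or] at hn
      obtain ⟨hnx, hnP, hnQ⟩ := hn
      simp only [renameIn]
      split_ifs with h <;>
        simp only [fin, Finset.mem_union, Finset.mem_erase, ihP hnP, ihQ hnQ] <;> aesop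
  | rcut P a x Q ihP ihQ =>
      intro hn m
      simp only [allIn, Finset.mem_insert, Finset.mem_union, not_or] at hn
      obtain ⟨hnx, hnP, hnQ⟩ := hn
      simp only [renameIn]
      split_ifs with h <;>
        simp only [fin, Finset.mem_union, Finset.mem_erase, ihP hnP, ihQ hnQ] <;> aesop
  | wl x P ih =>
      intro hn m
      simp only [allIn, Finset.mem_insert, not_or] at hn
      obtain ⟨hnx, hnP⟩ := hn
      simp only [renameIn, fin, Finset.mem_insert, ih hnP]
      aesop
  | wr P a ih =>
      intro hn m
      simp only [allIn] at hn
      simp only [renameIn, fin, ih hn]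
  | cl x x1 x2 P ih =>
      intro hn m
      simp only [allIn, Finset.mem_insert, not_or] at hn
      obtain ⟨hnx, hnx1, hnx2, hnP⟩ := hn
      simp only [renameIn]
      split_ifs with h <;>
        simp only [fin, Finset.mem_insert, Finset.mem_erase, ih hnP] <;> aesop
  | cr P a1 a2 a ih =>
      intro hn m
      simp only [allIn] at hn
      simp only [renameIn, fin, ih hn]

set_option maxHeartbeats 1000000 in
lemma mem_fout_renameOut (n o : ℕ) :
    ∀ P : Term, n ∉ P.allOut → ∀ m,
      (m ∈ (P.renameOut n o).fout ↔ (m ∈ P.fout ∧ m ≠ o) ∨ (m = n ∧ o ∈ P.fout)) := by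
  intro P
  induction P with
  | caps x a =>
      intro hn m
      simp only [allOut, Finset.mem_singleton] at hn
      simp only [renameOut, fout, Finset.mem_singleton]
      rcases eq_or_ne a o with h | h <;> aesop
  | exp x P b a ih =>
      intro hn m
      simp only [allOut, Finset.mem_insert, not_or] at hn
      obtain ⟨hnb, hna, hnP⟩ := hn
      simp only [renameOut]
      split_ifs with h h2 h2 <;>
        simp only [fout, Finset.mem_insert, Finset.mem_erase, ih hnP] <;> aesop
  | imp P a x y Q ihP ihQ =>
      intro hn m
      simp only [allOut, Finset.mem_insert, Finset.mem_union, not_or] at hn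
      obtain ⟨hna, hnP, hnQ⟩ := hn
      simp only [renameOut]
      split_ifs with h <;>
        simp only [fout, Finset.mem_union, Finset.mem_erase, ihP hnP, ihQ hnQ] <;> aesop
  | cut P a x Q ihP ihQ =>
      intro hn m
      simp only [allOut, Finset.mem_insert, Finset.mem_union, not_or] at hn
      obtain ⟨hna, hnP, hnQ⟩ := hn
      simp only [renameOut]
      split_ifs with h <;>
        simp only [fout, Finset.mem_union, Finset.mem_erase, ihP hnP, ihQ hnQ] <;> aesop
  | lcut P a x Q ihP ihQ =>
      intro hn m
      simp only [allOut, Finset.mem_insert, Finset.mem_union, not_or] at hn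
      obtain ⟨hna, hnP, hnQ⟩ := hn
      simp only [renameOut]
      split_ifs with h <;>
        simp only [fout, Finset.mem_union, Finset.mem_erase, ihP hnP, ihQ hnQ] <;> aesop
  | rcut P a x Q ihP ihQ =>
      intro hn m
      simp only [allOut, Finset.mem_insert, Finset.mem_union, not_or] at hn
      obtain ⟨hna, hnP, hnQ⟩ := hn
      simp only [renameOut]
      split_ifs with h <;>
        simp only [fout, Finset.mem_union, Finset.mem_erase, ihP hnP, ihQ hnQ] <;> aesop
  | wl x P ih =>
      intro hn m
      simp only [allOut] at hn
      simp only [renameOut, fout, ih hn]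
  | wr P a ih =>
      intro hn m
      simp only [allOut, Finset.mem_insert, not_or] at hn
      obtain ⟨hna, hnP⟩ := hn
      simp only [renameOut, fout, Finset.mem_insert, ih hnP]
      aesop
  | cl x x1 x2 P ih =>
      intro hn m
      simp only [allOut] at hn
      simp only [renameOut, fout, ih hn]
  | cr P a1 a2 a ih =>
      intro hn m
      simp only [allOut, Finset.mem_insert, not_or] at hn
      obtain ⟨hna, hna1, hna2, hnP⟩ := hn
      simp only [renameOut]
      split_ifs with h <;>
        simp only [fout, Finset.mem_insert, Finset.mem_erase, ih hnP] <;> aesop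


lemma fout_foldr_renameIn (k : ℕ) (l : List ℕ) (P : Term) :
    (l.foldr (fun z t => t.renameIn (z + k) z) P).fout = P.fout := by
  induction l with
  | nil => rfl
  | cons z tl ih => simp only [List.foldr_cons, fout_renameIn, ih]

lemma allOut_foldr_renameIn (k : ℕ) (l : List ℕ) (P : Term) :
    (l.foldr (fun z t => t.renameIn (z + k) z) P).allOut = P.allOut := by
  induction l with
  | nil => rfl
  | cons z tl ih => simp only [List.foldr_cons, allOut_renameIn, ih]

lemma fin_foldr_renameOut (k : ℕ) (l : List ℕ) (P : Term) :
    (l.foldr (fun z t => t.renameOut (z + k) z) P).fin = P.fin := by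
  induction l with
  | nil => rfl
  | cons z tl ih => simp only [List.foldr_cons, fin_renameOut, ih]

lemma allIn_foldr_renameOut (k : ℕ) (l : List ℕ) (P : Term) :
    (l.foldr (fun z t => t.renameOut (z + k) z) P).allIn = P.allIn := by
  induction l with
  | nil => rfl
  | cons z tl ih => simp only [List.foldr_cons, allIn_renameOut, ih]

lemma mem_allIn_foldr_renameIn (k : ℕ) (l : List ℕ) (P : Term) (m : ℕ) :
    m ∈ (l.foldr (fun z t => t.renameIn (z + k) z) P).allIn →
      m ∈ P.allIn ∨ ∃ z ∈ l, m = z + k := by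
  induction l with
  | nil => exact fun h => Or.inl h
  | cons z tl ih =>
      intro h
      rcases mem_allIn_renameIn _ _ _ _ h with h | h
      · exact Or.inr ⟨z, by simp, h⟩
      · rcases ih h with h | ⟨w, hw, hm⟩
        · exact Or.inl h
        · exact Or.inr ⟨w, by simp [hw], hm⟩

lemma mem_allOut_foldr_renameOut (k : ℕ) (l : List ℕ) (P : Term) (m : ℕ) :
    m ∈ (l.foldr (fun z t => t.renameOut (z + k) z) P).allOut →
      m ∈ P.allOut ∨ ∃ z ∈ l, m = z + k := by
  induction l with
  | nil => exact fun h => Or.inl h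
  | cons z tl ih =>
      intro h
      rcases mem_allOut_renameOut _ _ _ _ h with h | h
      · exact Or.inr ⟨z, by simp, h⟩
      · rcases ih h with h | ⟨w, hw, hm⟩
        · exact Or.inl h
        · exact Or.inr ⟨w, by simp [hw], hm⟩

lemma mem_fin_foldr_renameIn (k : ℕ) (l : List ℕ) (P : Term)
    (hnd : l.Nodup) (hl : ∀ z ∈ l, z ∈ P.allIn) (hf : ∀ z ∈ l, z + k ∉ P.allIn) :
    ∀ m, m ∈ (l.foldr (fun z t => t.renameIn (z + k) z) P).fin ↔
      (m ∈ P.fin ∧ m ∉ l) ∨ ∃ z ∈ l, z ∈ P.fin ∧ m = z + k := by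
  induction l with
  | nil => simp
  | cons z tl ih =>
      obtain ⟨hzl, hnd'⟩ := List.nodup_cons.mp hnd
      have hltl : ∀ w ∈ tl, w ∈ P.allIn := fun w hw => hl w (by simp [hw])
      have hftl : ∀ w ∈ tl, w + k ∉ P.allIn := fun w hw => hf w (by simp [hw])
      have ih' := ih hnd' hltl hftl
      have hA : ∀ w ∈ tl, z ≠ w + k := fun w hw he => hftl w hw (he ▸ hl z (by simp))
      intro m
      have hfresh : z + k ∉ (tl.foldr (fun z t => t.renameIn (z + k) z) P).allIn := by
        intro h
        rcases mem_allIn_foldr_renameIn k tl P _ h with h | ⟨w, hw, he⟩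
        · exact hf z (by simp) h
        · have : z = w := by omega
          exact hzl (this ▸ hw)
      rw [List.foldr_cons, mem_fin_renameIn _ _ _ hfresh m, ih' m, ih' z]
      constructor
      · rintro (⟨(⟨hmP, hmtl⟩ | ⟨w, hw, hwP, hm⟩), hmz⟩ | ⟨hm, (⟨hzP, _⟩ | ⟨w, hw, _, hzw⟩)⟩)
        · exact Or.inl ⟨hmP, by simp [hmz, hmtl]⟩
        · exact Or.inr ⟨w, by simp [hw], hwP, hm⟩
        · exact Or.inr ⟨z, by simp, hzP, hm⟩
        · exact absurd hzw (hA w hw)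
      · rintro (⟨hmP, hm⟩ | ⟨w, hw, hwP, hm⟩)
        · simp only [List.mem_cons, not_or] at hm
          exact Or.inl ⟨Or.inl ⟨hmP, hm.2⟩, hm.1⟩
        · simp only [List.mem_cons] at hw
          rcases hw with rfl | hw
          · exact Or.inr ⟨hm, Or.inl ⟨hwP, hzl⟩⟩
          · exact Or.inl ⟨Or.inr ⟨w, hw, hwP, hm⟩, fun he => hA w hw (he ▸ hm)⟩

lemma mem_fout_foldr_renameOut (k : ℕ) (l : List ℕ) (P : Term)
    (hnd : l.Nodup) (hl : ∀ z ∈ l, z ∈ P.allOut) (hf : ∀ z ∈ l, z + k ∉ P.allOut) :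
    ∀ m, m ∈ (l.foldr (fun z t => t.renameOut (z + k) z) P).fout ↔
      (m ∈ P.fout ∧ m ∉ l) ∨ ∃ z ∈ l, z ∈ P.fout ∧ m = z + k := by
  induction l with
  | nil => simp
  | cons z tl ih =>
      obtain ⟨hzl, hnd'⟩ := List.nodup_cons.mp hnd
      have hltl : ∀ w ∈ tl, w ∈ P.allOut := fun w hw => hl w (by simp [hw])
      have hftl : ∀ w ∈ tl, w + k ∉ P.allOut := fun w hw => hf w (by simp [hw])
      have ih' := ih hnd' hltl hftl
      have hA : ∀ w ∈ tl, z ≠ w + k := fun w hw he => hftl w hw (he ▸ hl z (by simp))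
      intro m
      have hfresh : z + k ∉ (tl.foldr (fun z t => t.renameOut (z + k) z) P).allOut := by
        intro h
        rcases mem_allOut_foldr_renameOut k tl P _ h with h | ⟨w, hw, he⟩
        · exact hf z (by simp) h
        · have : z = w := by omega
          exact hzl (this ▸ hw)
      rw [List.foldr_cons, mem_fout_renameOut _ _ _ hfresh m, ih' m, ih' z]
      constructor
      · rintro (⟨(⟨hmP, hmtl⟩ | ⟨w, hw, hwP, hm⟩), hmz⟩ | ⟨hm, (⟨hzP, _⟩ | ⟨w, hw, _, hzw⟩)⟩)
        · exact Or.inl ⟨hmP, by simp [hmz, hmtl]⟩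
        · exact Or.inr ⟨w, by simp [hw], hwP, hm⟩
        · exact Or.inr ⟨z, by simp, hzP, hm⟩
        · exact absurd hzw (hA w hw)
      · rintro (⟨hmP, hm⟩ | ⟨w, hw, hwP, hm⟩)
        · simp only [List.mem_cons, not_or] at hm
          exact Or.inl ⟨Or.inl ⟨hmP, hm.2⟩, hm.1⟩
        · simp only [List.mem_cons] at hw
          rcases hw with rfl | hw
          · exact Or.inr ⟨hm, Or.inl ⟨hwP, hzl⟩⟩
          · exact Or.inl ⟨Or.inr ⟨w, hw, hwP, hm⟩, fun he => hA w hw (he ▸ hm)⟩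

lemma fout_foldr_cl (k : ℕ) (l : List ℕ) (t : Term) :
    (l.foldr (fun z u => cl z (z + k) (z + 2 * k) u) t).fout = t.fout := by
  induction l with
  | nil => rfl
  | cons z tl ih => simp only [List.foldr_cons, fout, ih]

lemma fin_foldr_cr (k : ℕ) (l : List ℕ) (t : Term) :
    (l.foldr (fun a u => cr u (a + k) (a + 2 * k) a) t).fin = t.fin := by
  induction l with
  | nil => rfl
  | cons z tl ih => simp only [List.foldr_cons, fin, ih]

lemma mem_fin_foldr_cl (k : ℕ) (l : List ℕ) (t : Term)
    (h : ∀ z ∈ l, ∀ z' ∈ l, z' ≠ z + k ∧ z' ≠ z + 2 * k) :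
    ∀ m, m ∈ (l.foldr (fun z u => cl z (z + k) (z + 2 * k) u) t).fin ↔
      m ∈ l ∨ (m ∈ t.fin ∧ ∀ z ∈ l, m ≠ z + k ∧ m ≠ z + 2 * k) := by
  induction l with
  | nil => simp
  | cons z tl ih =>
      have htl : ∀ w ∈ tl, ∀ w' ∈ tl, w' ≠ w + k ∧ w' ≠ w + 2 * k :=
        fun w hw w' hw' => h w (by simp [hw]) w' (by simp [hw'])
      have ih' := ih htl
      intro m
      simp only [List.foldr_cons, fin, Finset.mem_insert, Finset.mem_erase, ih' m,
        List.mem_cons]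
      constructor
      · rintro (rfl | ⟨h1, h2, (hmtl | ⟨hmt, havoid⟩)⟩)
        · exact Or.inl (Or.inl rfl)
        · exact Or.inl (Or.inr hmtl)
        · refine Or.inr ⟨hmt, fun w hw => ?_⟩
          rcases hw with rfl | hw
          · exact ⟨h2, h1⟩
          · exact havoid w hw
      · rintro ((hmz | hmtl) | ⟨hmt, havoid⟩)
        · exact Or.inl hmz
        · exact Or.inr ⟨(h z (by simp) m (by simp [hmtl])).2,
            (h z (by simp) m (by simp [hmtl])).1, Or.inl hmtl⟩
        · exact Or.inr ⟨(havoid z (by simp)).2, (havoid z (by simp)).1,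
            Or.inr ⟨hmt, fun w hw => havoid w (by simp [hw])⟩⟩

lemma mem_fout_foldr_cr (k : ℕ) (l : List ℕ) (t : Term)
    (h : ∀ z ∈ l, ∀ z' ∈ l, z' ≠ z + k ∧ z' ≠ z + 2 * k) :
    ∀ m, m ∈ (l.foldr (fun a u => cr u (a + k) (a + 2 * k) a) t).fout ↔
      m ∈ l ∨ (m ∈ t.fout ∧ ∀ z ∈ l, m ≠ z + k ∧ m ≠ z + 2 * k) := by
  induction l with
  | nil => simp
  | cons z tl ih =>
      have htl : ∀ w ∈ tl, ∀ w' ∈ tl, w' ≠ w + k ∧ w' ≠ w + 2 * k :=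
        fun w hw w' hw' => h w (by simp [hw]) w' (by simp [hw'])
      have ih' := ih htl
      intro m
      simp only [List.foldr_cons, fout, Finset.mem_insert, Finset.mem_erase, ih' m,
        List.mem_cons]
      constructor
      · rintro (rfl | ⟨h1, h2, (hmtl | ⟨hmt, havoid⟩)⟩)
        · exact Or.inl (Or.inl rfl)
        · exact Or.inl (Or.inr hmtl)
        · refine Or.inr ⟨hmt, fun w hw => ?_⟩
          rcases hw with rfl | hw
          · exact ⟨h2, h1⟩
          · exact havoid w hw
      · rintro ((hmz | hmtl) | ⟨hmt, havoid⟩)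
        · exact Or.inl hmz
        · exact Or.inr ⟨(h z (by simp) m (by simp [hmtl])).2,
            (h z (by simp) m (by simp [hmtl])).1, Or.inl hmtl⟩
        · exact Or.inr ⟨(havoid z (by simp)).2, (havoid z (by simp)).1,
            Or.inr ⟨hmt, fun w hw => havoid w (by simp [hw])⟩⟩


lemma mem_join2_fin (k : ℕ) (SI SO : Finset ℕ) (P Q : Term)
    (build : Term → Term → Term) (E : Finset ℕ) (xb : ℕ)
    (hb : ∀ p q, (build p q).fin = E ∪ (p.fin ∪ q.fin.erase xb))
    (hSIP : SI ⊆ P.allIn) (hSIQ : SI ⊆ Q.allIn)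
    (hfP : ∀ z ∈ SI, z + k ∉ P.allIn) (hfQ : ∀ z ∈ SI, z + 2 * k ∉ Q.allIn)
    (hcl : ∀ z ∈ SI, ∀ z' ∈ SI, z' ≠ z + k ∧ z' ≠ z + 2 * k) (m : ℕ) :
    m ∈ (join2 k SI SO P Q build).fin ↔
      m ∈ SI ∨ ((m ∈ E ∨ m ∈ P.fin ∨ (m ∈ Q.fin ∧ m ≠ xb)) ∧ m ∉ SI ∧
        ∀ z ∈ SI, m ≠ z + k ∧ m ≠ z + 2 * k) := by
  have hnd := SI.sort_nodup (· ≤ ·)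
  have hmem : ∀ z, z ∈ SI.sort (· ≤ ·) ↔ z ∈ SI := fun z => Finset.mem_sort _
  rw [join2, clChain, crChain, renameSetIn, renameSetIn, renameSetOut, renameSetOut]
  rw [mem_fin_foldr_cl k _ _
    (fun z hz z' hz' => hcl z ((hmem z).mp hz) z' ((hmem z').mp hz'))]
  rw [fin_foldr_cr, hb]
  have hP1 : ∀ m, m ∈ ((SO.sort (· ≤ ·)).foldr (fun z t => t.renameOut (z + k) z)
      ((SI.sort (· ≤ ·)).foldr (fun z t => t.renameIn (z + k) z) P)).fin ↔
      (m ∈ P.fin ∧ m ∉ SI) ∨ ∃ z ∈ SI, z ∈ P.fin ∧ m = z + k := by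
    intro m
    rw [fin_foldr_renameOut, mem_fin_foldr_renameIn k _ _ hnd
      (fun z hz => hSIP ((hmem z).mp hz))
      (fun z hz => hfP z ((hmem z).mp hz)) m]
    simp only [hmem]
  have hQ1 : ∀ m, m ∈ ((SO.sort (· ≤ ·)).foldr (fun z t => t.renameOut (z + 2 * k) z)
      ((SI.sort (· ≤ ·)).foldr (fun z t => t.renameIn (z + 2 * k) z) Q)).fin ↔
      (m ∈ Q.fin ∧ m ∉ SI) ∨ ∃ z ∈ SI, z ∈ Q.fin ∧ m = z + 2 * k := by
    intro m
    rw [fin_foldr_renameOut, mem_fin_foldr_renameIn (2 * k) _ _ hnd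
      (fun z hz => hSIQ ((hmem z).mp hz))
      (fun z hz => hfQ z ((hmem z).mp hz)) m]
    simp only [hmem]
  simp only [Finset.mem_union, Finset.mem_erase, hP1, hQ1, hmem]
  constructor
  · rintro (hSI | ⟨hF, havoid⟩)
    · exact Or.inl hSI
    · by_cases hmSI : m ∈ SI
      · exact Or.inl hmSI
      · refine Or.inr ⟨?_, hmSI, havoid⟩
        rcases hF with hE | (⟨hP, _⟩ | ⟨z, hz, _, hm⟩) | ⟨hxb, (⟨hQ, _⟩ | ⟨z, hz, _, hm⟩)⟩
        · exact Or.inl hE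
        · exact Or.inr (Or.inl hP)
        · exact absurd hm (havoid z hz).1
        · exact Or.inr (Or.inr ⟨hQ, hxb⟩)
        · exact absurd hm (havoid z hz).2
  · rintro (hSI | ⟨hF, hmSI, havoid⟩)
    · exact Or.inl hSI
    · refine Or.inr ⟨?_, havoid⟩
      rcases hF with hE | hP | ⟨hQ, hxb⟩
      · exact Or.inl hE
      · exact Or.inr (Or.inl (Or.inl ⟨hP, hmSI⟩))
      · exact Or.inr (Or.inr ⟨hxb, Or.inl ⟨hQ, hmSI⟩⟩)

lemma join2_fin_eq (k : ℕ) (SI SO : Finset ℕ) (P Q : Term)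
    (build : Term → Term → Term) (E : Finset ℕ) (xb : ℕ)
    (hb : ∀ p q, (build p q).fin = E ∪ (p.fin ∪ q.fin.erase xb))
    (hPk : ∀ w ∈ P.allIn, w < k) (hQk : ∀ w ∈ Q.allIn, w < k)
    (hE : ∀ e ∈ E, e < k)
    (hSIP : SI ⊆ P.fin) (hSIQ : SI ⊆ Q.fin.erase xb) :
    (join2 k SI SO P Q build).fin = E ∪ (P.fin ∪ Q.fin.erase xb) := by
  have hSIP' : SI ⊆ P.allIn := hSIP.trans (fin_subset_allIn P)
  have hSIQ' : SI ⊆ Q.allIn :=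
    hSIQ.trans ((Finset.erase_subset _ _).trans (fin_subset_allIn Q))
  ext m
  rw [mem_join2_fin k SI SO P Q build E xb hb hSIP' hSIQ'
    (fun z _ h => by have := hPk _ h; omega)
    (fun z _ h => by have := hQk _ h; omega)
    (fun z hz z' hz' => by
      have := hPk _ (hSIP' hz')
      constructor <;> omega)]
  simp only [Finset.mem_union, Finset.mem_erase]
  constructor
  · rintro (hSI | ⟨hF, _, _⟩)
    · exact Or.inr (Or.inl (hSIP hSI))
    · rcases hF with hE' | hP | ⟨hQ, hxb⟩
      · exact Or.inl hE'
      · exact Or.inr (Or.inl hP)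
      · exact Or.inr (Or.inr ⟨hxb, hQ⟩)
  · intro hF
    by_cases hmSI : m ∈ SI
    · exact Or.inl hmSI
    · have hmk : m < k := by
        rcases hF with hE' | hP | ⟨_, hQ⟩
        · exact hE _ hE'
        · exact hPk _ (fin_subset_allIn P hP)
        · exact hQk _ (fin_subset_allIn Q hQ)
      refine Or.inr ⟨?_, hmSI, fun z _ => by constructor <;> omega⟩
      rcases hF with hE' | hP | ⟨hxb, hQ⟩
      · exact Or.inl hE'
      · exact Or.inr (Or.inl hP)
      · exact Or.inr (Or.inr ⟨hQ, hxb⟩)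

lemma join2_fout_eq (k : ℕ) (SI SO : Finset ℕ) (P Q : Term)
    (build : Term → Term → Term) (a : ℕ)
    (hb : ∀ p q, (build p q).fout = p.fout.erase a ∪ q.fout)
    (hPk : ∀ w ∈ P.allOut, w < k) (hQk : ∀ w ∈ Q.allOut, w < k) (ha : a < k)
    (hSOP : SO ⊆ P.fout.erase a) (hSOQ : SO ⊆ Q.fout) :
    (join2 k SI SO P Q build).fout = P.fout.erase a ∪ Q.fout := by
  have hnd := SO.sort_nodup (· ≤ ·)
  have hmem : ∀ z, z ∈ SO.sort (· ≤ ·) ↔ z ∈ SO := fun z => Finset.mem_sort _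
  have hSOP' : SO ⊆ P.allOut :=
    hSOP.trans ((Finset.erase_subset _ _).trans (fout_subset_allOut P))
  have hSOQ' : SO ⊆ Q.allOut := hSOQ.trans (fout_subset_allOut Q)
  ext m
  rw [join2, clChain, crChain, renameSetIn, renameSetIn, renameSetOut, renameSetOut,
    fout_foldr_cl]
  rw [mem_fout_foldr_cr k _ _
    (fun z hz z' hz' => by
      have := hPk _ (hSOP' ((hmem z').mp hz'))
      constructor <;> omega)]
  rw [hb]
  have hP1 : ∀ m, m ∈ ((SO.sort (· ≤ ·)).foldr (fun z t => t.renameOut (z + k) z)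
      ((SI.sort (· ≤ ·)).foldr (fun z t => t.renameIn (z + k) z) P)).fout ↔
      (m ∈ P.fout ∧ m ∉ SO) ∨ ∃ z ∈ SO, z ∈ P.fout ∧ m = z + k := by
    intro m
    rw [mem_fout_foldr_renameOut k _ _ hnd
      (fun z hz => by
        rw [allOut_foldr_renameIn]; exact hSOP' ((hmem z).mp hz))
      (fun z hz h => by
        rw [allOut_foldr_renameIn] at h
        have := hPk _ h; omega) m]
    rw [fout_foldr_renameIn]
    simp only [hmem]
  have hQ1 : ∀ m, m ∈ ((SO.sort (· ≤ ·)).foldr (fun z t => t.renameOut (z + 2 * k) z)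
      ((SI.sort (· ≤ ·)).foldr (fun z t => t.renameIn (z + 2 * k) z) Q)).fout ↔
      (m ∈ Q.fout ∧ m ∉ SO) ∨ ∃ z ∈ SO, z ∈ Q.fout ∧ m = z + 2 * k := by
    intro m
    rw [mem_fout_foldr_renameOut (2 * k) _ _ hnd
      (fun z hz => by
        rw [allOut_foldr_renameIn]; exact hSOQ' ((hmem z).mp hz))
      (fun z hz h => by
        rw [allOut_foldr_renameIn] at h
        have := hQk _ h; omega) m]
    rw [fout_foldr_renameIn]
    simp only [hmem]
  simp only [Finset.mem_union, Finset.mem_erase, hP1, hQ1, hmem]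
  constructor
  · rintro (hSO | ⟨hF, havoid⟩)
    · have := hSOP hSO
      rw [Finset.mem_erase] at this
      exact Or.inl ⟨this.1, this.2⟩
    · rcases hF with ⟨hma, (⟨hP, _⟩ | ⟨z, hz, _, hm⟩)⟩ | (⟨hQ, _⟩ | ⟨z, hz, _, hm⟩)
      · exact Or.inl ⟨hma, hP⟩
      · exact absurd hm (havoid z hz).1
      · exact Or.inr hQ
      · exact absurd hm (havoid z hz).2
  · intro hF
    by_cases hmSO : m ∈ SO
    · exact Or.inl hmSO
    · have hmk : m < k := by
        rcases hF with ⟨_, hP⟩ | hQ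
        · exact hPk _ (fout_subset_allOut P hP)
        · exact hQk _ (fout_subset_allOut Q hQ)
      refine Or.inr ⟨?_, fun z _ => by constructor <;> omega⟩
      rcases hF with ⟨hma, hP⟩ | hQ
      · exact Or.inl ⟨hma, Or.inl ⟨hP, hmSO⟩⟩
      · exact Or.inr (Or.inl ⟨hQ, hmSO⟩)

lemma fin_wlIf (x : ℕ) (P : Term) : (wlIf x P).fin = insert x P.fin := by
  rw [wlIf]; split_ifs with h
  · exact (Finset.insert_eq_self.mpr h).symm
  · rfl

lemma fout_wlIf (x : ℕ) (P : Term) : (wlIf x P).fout = P.fout := by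
  rw [wlIf]; split_ifs <;> rfl

lemma allIn_wlIf (x : ℕ) (P : Term) : (wlIf x P).allIn ⊆ insert x P.allIn := by
  rw [wlIf]; split_ifs
  · exact Finset.subset_insert _ _
  · exact Finset.Subset.refl _

lemma allOut_wlIf (x : ℕ) (P : Term) : (wlIf x P).allOut = P.allOut := by
  rw [wlIf]; split_ifs <;> rfl

lemma fout_wrIf (a : ℕ) (P : Term) : (wrIf a P).fout = insert a P.fout := by
  rw [wrIf]; split_ifs with h
  · exact (Finset.insert_eq_self.mpr h).symm
  · rfl

lemma fin_wrIf (a : ℕ) (P : Term) : (wrIf a P).fin = P.fin := by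
  rw [wrIf]; split_ifs <;> rfl

lemma allOut_wrIf (a : ℕ) (P : Term) : (wrIf a P).allOut ⊆ insert a P.allOut := by
  rw [wrIf]; split_ifs
  · exact Finset.subset_insert _ _
  · exact Finset.Subset.refl _

lemma allIn_wrIf (a : ℕ) (P : Term) : (wrIf a P).allIn = P.allIn := by
  rw [wrIf]; split_ifs <;> rfl


lemma encode_cutlike_fin (P' Q' : Term) (a x k : ℕ)
    (hk : P'.maxName < k ∧ Q'.maxName < k)
    (build : Term → Term → Term)
    (hbfin : ∀ p q, (build p q).fin = p.fin ∪ q.fin.erase x) :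
    (join2 k (P'.fin ∩ Q'.fin.erase x) ((P'.fout.erase a) ∩ Q'.fout) P' Q' build).fin
      = P'.fin ∪ Q'.fin.erase x := by
  have h := join2_fin_eq k (P'.fin ∩ Q'.fin.erase x) ((P'.fout.erase a) ∩ Q'.fout)
    P' Q' build ∅ x
    (fun p q => by rw [hbfin, Finset.empty_union])
    (fun w hw => lt_of_le_of_lt (allIn_le_maxName P' w hw) hk.1)
    (fun w hw => lt_of_le_of_lt (allIn_le_maxName Q' w hw) hk.2)
    (fun e he => absurd he (Finset.notMem_empty e))
    Finset.inter_subset_left Finset.inter_subset_right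
  rw [h, Finset.empty_union]

lemma encode_cutlike_fout (P' Q' : Term) (a x k : ℕ) (SI : Finset ℕ)
    (hk : P'.maxName < k ∧ Q'.maxName < k ∧ a < k)
    (build : Term → Term → Term)
    (hbfout : ∀ p q, (build p q).fout = p.fout.erase a ∪ q.fout) :
    (join2 k SI ((P'.fout.erase a) ∩ Q'.fout) P' Q' build).fout
      = P'.fout.erase a ∪ Q'.fout :=
  join2_fout_eq k SI ((P'.fout.erase a) ∩ Q'.fout) P' Q' build a hbfout
    (fun w hw => lt_of_le_of_lt (allOut_le_maxName P' w hw) hk.1)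
    (fun w hw => lt_of_le_of_lt (allOut_le_maxName Q' w hw) hk.2.1)
    hk.2.2 Finset.inter_subset_left Finset.inter_subset_right

end Term

open Term in
theorem encode_preserves_free_names' (P : XTerm) :
    P.fin = (encode P).fin ∧ P.fout = (encode P).fout := by
  induction P with
  | caps x a => exact ⟨rfl, rfl⟩
  | exp x P b a ih =>
      obtain ⟨hPf, hPo⟩ := ih
      set P' := wrIf b (wlIf x (encode P)) with hP'
      set K := P'.maxName + a + 1 with hK
      have e : encode (XTerm.exp x P b a) =
          if a ∈ P'.fout then
            Term.cr (Term.exp x (P'.renameOut (a + K) a) b (a + 2 * K))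
              (a + K) (a + 2 * K) a
          else Term.exp x P' b a := rfl
      clear_value P' K
      have hfinP' : P'.fin = insert x P.fin := by
        rw [hP', fin_wrIf, fin_wlIf, ← hPf]
      have hfoutP' : P'.fout = insert b P.fout := by
        rw [hP', fout_wrIf, fout_wlIf, ← hPo]
      have hbound : ∀ w ∈ P'.fout, w ≤ P'.maxName :=
        fun w hw => allOut_le_maxName _ _ (fout_subset_allOut _ hw)
      by_cases h : a ∈ P'.fout
      · constructor
        · rw [XTerm.fin, e, if_pos h, Term.fin, Term.fin, fin_renameOut, hfinP',
            Finset.erase_insert_eq_erase, hPf]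
        · have hna : (a + K) ∉ P'.allOut := fun hc => by
            have := allOut_le_maxName P' _ hc; omega
          have e2 : (P'.renameOut (a + K) a).fout = insert (a + K) (P'.fout.erase a) := by
            ext w
            rw [mem_fout_renameOut _ _ P' hna w]
            simp only [Finset.mem_insert, Finset.mem_erase]
            tauto
          rw [XTerm.fout, e, if_pos h, Term.fout, Term.fout, e2, hfoutP']
          ext w
          simp only [Finset.mem_insert, Finset.mem_erase]
          have hw1 : w ∈ P.fout → w ≠ a + K ∧ w ≠ a + 2 * K := by
            intro hw
            have := hbound w (by rw [hfoutP']; exact Finset.mem_insert_of_mem hw)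
            constructor <;> omega
          have hw2 : w = b → w ≠ a + K ∧ w ≠ a + 2 * K := by
            intro hw
            have := hbound b (by rw [hfoutP']; exact Finset.mem_insert_self _ _)
            subst hw
            constructor <;> omega
          have hw3 : w = a → w ≠ a + K ∧ w ≠ a + 2 * K := by
            intro hw; subst hw; constructor <;> omega
          clear e hP' hK hbound h hPf hPo hfinP' hfoutP'
          tauto
      · constructor
        · rw [XTerm.fin, e, if_neg h, Term.fin, hfinP',
            Finset.erase_insert_eq_erase, hPf]
        · rw [XTerm.fout, e, if_neg h, Term.fout, hfoutP',
            Finset.erase_insert_eq_erase]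
  | imp P a x y Q ihP ihQ =>
      obtain ⟨hPf, hPo⟩ := ihP
      obtain ⟨hQf, hQo⟩ := ihQ
      set P' := wrIf a (encode P) with hP'
      set Q' := wlIf y (encode Q) with hQ'
      set k := P'.maxName + Q'.maxName + a + x + y + 1 with hk
      set P'' := P'.renameIn (x + 5 * k) x with hP''
      set Q'' := Q'.renameIn (x + 5 * k) x with hQ''
      have e : encode (XTerm.imp P a x y Q) =
          if x ∈ P'.fin ∪ Q'.fin.erase y then
            Term.cl x (x + 5 * k) (x + 6 * k)
              (join2 k (P''.fin ∩ Q''.fin.erase y) ((P''.fout.erase a) ∩ Q''.fout)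
                P'' Q'' (fun p q => Term.imp p a (x + 6 * k) y q))
          else
            join2 k (P'.fin ∩ Q'.fin.erase y) ((P'.fout.erase a) ∩ Q'.fout)
              P' Q' (fun p q => Term.imp p a x y q) := rfl
      have hkk : k = P'.maxName + Q'.maxName + a + x + y + 1 := hk
      clear_value P' Q' k P'' Q''
      have hA' : P'.fin = P.fin := by rw [hP', fin_wrIf, ← hPf]
      have hBe' : Q'.fin.erase y = Q.fin.erase y := by
        rw [hQ', fin_wlIf, Finset.erase_insert_eq_erase, ← hQf]
      have hAo : P'.fout = insert a P.fout := by rw [hP', fout_wrIf, ← hPo]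
      have hBo : Q'.fout = Q.fout := by rw [hQ', fout_wlIf, ← hQo]
      have hboundA : ∀ w ∈ P'.fin, w < k := fun w hw => by
        have := allIn_le_maxName P' w (fin_subset_allIn P' hw); omega
      have hboundB : ∀ w ∈ Q'.fin, w < k := fun w hw => by
        have := allIn_le_maxName Q' w (fin_subset_allIn Q' hw); omega
      have hboundAI : ∀ w ∈ P'.allIn, w < k := fun w hw => by
        have := allIn_le_maxName P' w hw; omega
      have hboundBI : ∀ w ∈ Q'.allIn, w < k := fun w hw => by
        have := allIn_le_maxName Q' w hw; omega
      have hbfin : ∀ (x' : ℕ) (p q : Term),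
          (Term.imp p a x' y q).fin = {x'} ∪ (p.fin ∪ q.fin.erase y) := by
        intro x' p q
        rw [Term.fin, Finset.insert_eq]
      have hbfout : ∀ (x' : ℕ) (p q : Term),
          (Term.imp p a x' y q).fout = p.fout.erase a ∪ q.fout := fun _ _ _ => rfl
      by_cases h : x ∈ P'.fin ∪ Q'.fin.erase y
      · -- contraction branch
        have hn5P : (x + 5 * k) ∉ P'.allIn := fun hc => by
          have := hboundAI _ hc; omega
        have hn5Q : (x + 5 * k) ∉ Q'.allIn := fun hc => by
          have := hboundBI _ hc; omega
        have memP'' : ∀ m, m ∈ P''.fin ↔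
            (m ∈ P'.fin ∧ m ≠ x) ∨ (m = x + 5 * k ∧ x ∈ P'.fin) := by
          intro m; rw [hP'']; exact mem_fin_renameIn _ _ P' hn5P m
        have memQ'' : ∀ m, m ∈ Q''.fin ↔
            (m ∈ Q'.fin ∧ m ≠ x) ∨ (m = x + 5 * k ∧ x ∈ Q'.fin) := by
          intro m; rw [hQ'']; exact mem_fin_renameIn _ _ Q' hn5Q m
        set SI := P''.fin ∩ Q''.fin.erase y with hSI
        have hSIb : ∀ z ∈ SI, z < k ∨ z = x + 5 * k := by
          intro z hz
          have hzP : z ∈ P''.fin := Finset.mem_inter.mp hz |>.1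
          rcases (memP'' z).mp hzP with ⟨hzA, _⟩ | ⟨rfl, _⟩
          · exact Or.inl (hboundA z hzA)
          · exact Or.inr rfl
        have hJ := mem_join2_fin k SI ((P''.fout.erase a) ∩ Q''.fout) P'' Q''
          (fun p q => Term.imp p a (x + 6 * k) y q) {x + 6 * k} y
          (fun p q => hbfin (x + 6 * k) p q)
          (Finset.inter_subset_left.trans (fin_subset_allIn P''))
          (Finset.inter_subset_right.trans
            ((Finset.erase_subset _ _).trans (fin_subset_allIn Q'')))
          (fun z hz hc => by
            rw [hP''] at hc
            rcases mem_allIn_renameIn _ _ _ _ hc with hc | hc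
            · rcases hSIb z hz with hzk | rfl <;> omega
            · have := hboundAI _ hc; omega)
          (fun z hz hc => by
            rw [hQ''] at hc
            rcases mem_allIn_renameIn _ _ _ _ hc with hc | hc
            · rcases hSIb z hz with hzk | rfl <;> omega
            · have := hboundBI _ hc; omega)
          (fun z hz z' hz' => by
            rcases hSIb z hz with h1 | rfl <;> rcases hSIb z' hz' with h2 | rfl <;>
              constructor <;> omega)
        constructor
        · rw [XTerm.fin, e, if_pos h, Term.fin, ← hA', ← hBe']
          ext m
          simp only [Finset.mem_insert, Finset.mem_erase, Finset.mem_union]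
          constructor
          · rintro (rfl | hm)
            · exact Or.inl rfl
            · by_cases hmx : m = x
              · exact Or.inl hmx
              · have hmk : m < k := by
                  rcases hm with hmA | ⟨hmy, hmB⟩
                  · exact hboundA m hmA
                  · exact hboundB m hmB
                refine Or.inr ⟨by omega, by omega, (hJ m).mpr ?_⟩
                by_cases hmSI : m ∈ SI
                · exact Or.inl hmSI
                · refine Or.inr ⟨?_, hmSI, fun z hz => ?_⟩
                  · rcases hm with hmA | ⟨hmy, hmB⟩
                    · exact Or.inr (Or.inl ((memP'' m).mpr (Or.inl ⟨hmA, hmx⟩)))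
                    · exact Or.inr (Or.inr ⟨(memQ'' m).mpr (Or.inl ⟨hmB, hmx⟩), hmy⟩)
                  · rcases hSIb z hz with hzk | rfl <;> constructor <;> omega
          · rintro (rfl | ⟨hm6, hm5, hmJ⟩)
            · exact Or.inl rfl
            · rcases (hJ m).mp hmJ with hmSI | ⟨hF, _, _⟩
              · have hmP : m ∈ P''.fin := Finset.mem_inter.mp hmSI |>.1
                rcases (memP'' m).mp hmP with ⟨hmA, _⟩ | ⟨rfl, _⟩
                · exact Or.inr (Or.inl hmA)
                · exact absurd rfl hm5
              · rcases hF with hm6' | hmP | ⟨hmQ, hmy⟩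
                · rw [Finset.mem_singleton] at hm6'
                  exact absurd hm6' hm6
                · rcases (memP'' m).mp hmP with ⟨hmA, _⟩ | ⟨rfl, _⟩
                  · exact Or.inr (Or.inl hmA)
                  · exact absurd rfl hm5
                · rcases (memQ'' m).mp hmQ with ⟨hmB, _⟩ | ⟨rfl, _⟩
                  · exact Or.inr (Or.inr ⟨hmy, hmB⟩)
                  · exact absurd rfl hm5
        · rw [XTerm.fout, e, if_pos h, Term.fout,
            join2_fout_eq k SI ((P''.fout.erase a) ∩ Q''.fout) P'' Q''
              (fun p q => Term.imp p a (x + 6 * k) y q) a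
              (fun p q => hbfout (x + 6 * k) p q)
              (fun w hw => by
                rw [hP'', allOut_renameIn] at hw
                have := allOut_le_maxName P' w hw; omega)
              (fun w hw => by
                rw [hQ'', allOut_renameIn] at hw
                have := allOut_le_maxName Q' w hw; omega)
              (by omega) Finset.inter_subset_left Finset.inter_subset_right,
            hP'', hQ'', fout_renameIn, fout_renameIn, hAo, hBo,
            Finset.erase_insert_eq_erase]
      · -- no contraction
        constructor
        · rw [XTerm.fin, e, if_neg h,
            join2_fin_eq k (P'.fin ∩ Q'.fin.erase y) ((P'.fout.erase a) ∩ Q'.fout)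
              P' Q' (fun p q => Term.imp p a x y q) {x} y
              (fun p q => hbfin x p q) hboundAI hboundBI
              (fun e' he' => by rw [Finset.mem_singleton] at he'; omega)
              Finset.inter_subset_left Finset.inter_subset_right,
            ← Finset.insert_eq, hA', hBe']
        · rw [XTerm.fout, e, if_neg h,
            join2_fout_eq k (P'.fin ∩ Q'.fin.erase y) ((P'.fout.erase a) ∩ Q'.fout)
              P' Q' (fun p q => Term.imp p a x y q) a
              (fun p q => hbfout x p q)
              (fun w hw => by have := allOut_le_maxName P' w hw; omega)
              (fun w hw => by have := allOut_le_maxName Q' w hw; omega)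
              (by omega) Finset.inter_subset_left Finset.inter_subset_right,
            hAo, hBo, Finset.erase_insert_eq_erase]
  | cut P a x Q ihP ihQ =>
      obtain ⟨hPf, hPo⟩ := ihP
      obtain ⟨hQf, hQo⟩ := ihQ
      set P' := wrIf a (encode P) with hP'
      set Q' := wlIf x (encode Q) with hQ'
      set k := P'.maxName + Q'.maxName + a + x + 1 with hk
      have e : encode (XTerm.cut P a x Q) =
          join2 k (P'.fin ∩ Q'.fin.erase x) ((P'.fout.erase a) ∩ Q'.fout) P' Q'
            (fun p q => Term.cut p a x q) := rfl
      constructor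
      · rw [XTerm.fin, e,
          encode_cutlike_fin P' Q' a x k (by omega)
            (fun p q => Term.cut p a x q) (fun p q => rfl),
          hP', fin_wrIf, hQ', fin_wlIf, Finset.erase_insert_eq_erase, hPf, hQf]
      · rw [XTerm.fout, e,
          encode_cutlike_fout P' Q' a x k (P'.fin ∩ Q'.fin.erase x) (by omega)
            (fun p q => Term.cut p a x q) (fun p q => rfl),
          hP', fout_wrIf, hQ', fout_wlIf, Finset.erase_insert_eq_erase, hPo, hQo]
  | lcut P a x Q ihP ihQ =>
      obtain ⟨hPf, hPo⟩ := ihP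
      obtain ⟨hQf, hQo⟩ := ihQ
      set P' := wrIf a (encode P) with hP'
      set Q' := wlIf x (encode Q) with hQ'
      set k := P'.maxName + Q'.maxName + a + x + 1 with hk
      have e : encode (XTerm.lcut P a x Q) =
          join2 k (P'.fin ∩ Q'.fin.erase x) ((P'.fout.erase a) ∩ Q'.fout) P' Q'
            (fun p q => Term.lcut p a x q) := rfl
      constructor
      · rw [XTerm.fin, e,
          encode_cutlike_fin P' Q' a x k (by omega)
            (fun p q => Term.lcut p a x q) (fun p q => rfl),
          hP', fin_wrIf, hQ', fin_wlIf, Finset.erase_insert_eq_erase, hPf, hQf]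
      · rw [XTerm.fout, e,
          encode_cutlike_fout P' Q' a x k (P'.fin ∩ Q'.fin.erase x) (by omega)
            (fun p q => Term.lcut p a x q) (fun p q => rfl),
          hP', fout_wrIf, hQ', fout_wlIf, Finset.erase_insert_eq_erase, hPo, hQo]
  | rcut P a x Q ihP ihQ =>
      obtain ⟨hPf, hPo⟩ := ihP
      obtain ⟨hQf, hQo⟩ := ihQ
      set P' := wrIf a (encode P) with hP'
      set Q' := wlIf x (encode Q) with hQ'
      set k := P'.maxName + Q'.maxName + a + x + 1 with hk
      have e : encode (XTerm.rcut P a x Q) =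
          join2 k (P'.fin ∩ Q'.fin.erase x) ((P'.fout.erase a) ∩ Q'.fout) P' Q'
            (fun p q => Term.rcut p a x q) := rfl
      constructor
      · rw [XTerm.fin, e,
          encode_cutlike_fin P' Q' a x k (by omega)
            (fun p q => Term.rcut p a x q) (fun p q => rfl),
          hP', fin_wrIf, hQ', fin_wlIf, Finset.erase_insert_eq_erase, hPf, hQf]
      · rw [XTerm.fout, e,
          encode_cutlike_fout P' Q' a x k (P'.fin ∩ Q'.fin.erase x) (by omega)
            (fun p q => Term.rcut p a x q) (fun p q => rfl),
          hP', fout_wrIf, hQ', fout_wlIf, Finset.erase_insert_eq_erase, hPo, hQo]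

end StarX

namespace StarX

/-- the encoding `⟦·⟧ : X → *x` preserves the set of free names:
`N(P) = N(⟦P⟧)` (both on innames and on outnames). -/
theorem encode_preserves_free_names (P : XTerm) :
    P.fin = (encode P).fin ∧ P.fout = (encode P).fout := by
  exact encode_preserves_free_names' P

end StarX
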